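/- (Borrowing along non-clairvoyant paths) Consider an ALG-schedule and a reference time t ≥ 0. If a job j ∈ A(t) can reach a job i via a path in the borrow graph consisting only of E_N-edges, then ȳ_j ≥ ȳ_i, where ȳ_j = min(y_j(t), α·(p j)) is the truncated progress. -/
import Mathlib


open MeasureTheory Set

open scoped Classical

noncomputable section

variable {J : Type*}

/-- Total work done on job `j` by time `u` under the schedule `σ`. -/
def workDone (σ : ℝ → J → ℝ) (j : J) (u : ℝ) : ℝ := ∫ v in (0:ℝ)..u, σ v j

/-- Remaining processing time of job `j` at time `u`. -/
def remT (p : J → ℝ) (σ : ℝ → J → ℝ) (j : J) (u : ℝ) : ℝ := p j - workDone σ j u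

/-- Completion time of job `j`: the least `u` with `workDone σ j u = p j`,
    and `⊤` if the job never completes. -/
def cTime (p : J → ℝ) (σ : ℝ → J → ℝ) (j : J) : EReal :=
  sInf ((fun v : ℝ => (v : EReal)) '' {v : ℝ | workDone σ j v = p j})

/-- Job `j` is available at time `u`: released and not yet completed. -/
def availAt (r p : J → ℝ) (σ : ℝ → J → ℝ) (u : ℝ) (j : J) : Prop :=
  r j ≤ u ∧ (u : EReal) < cTime p σ j

/-- Job `j` is processed at time `u`. -/
def procAt (σ : ℝ → J → ℝ) (u : ℝ) (j : J) : Prop := 0 < σ u j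

/-- Job `j` is non-clairvoyant at time `u`. -/
def ncAt (r p : J → ℝ) (α : ℝ) (σ : ℝ → J → ℝ) (u : ℝ) (j : J) : Prop :=
  availAt r p σ u j ∧ workDone σ j u ≤ α * p j

/-- Job `j` is clairvoyant at time `u`. -/
def clAt (r p : J → ℝ) (α : ℝ) (σ : ℝ → J → ℝ) (u : ℝ) (j : J) : Prop :=
  availAt r p σ u j ∧ α * p j < workDone σ j u

/-- The time at which job `j` emits its signal: the least `u` with
    `workDone σ j u = α * p j`. -/
def emitT (p : J → ℝ) (α : ℝ) (σ : ℝ → J → ℝ) (j : J) : ℝ :=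
  sInf {u : ℝ | workDone σ j u = α * p j}

/-- Data of an instance: nonnegative release dates, positive processing times
    and `α ∈ (0,1)`. -/
structure IsInstance (r p : J → ℝ) (α : ℝ) : Prop where
  r_nonneg : ∀ j, 0 ≤ r j
  p_pos : ∀ j, 0 < p j
  alpha_mem : α ∈ Set.Ioo (0 : ℝ) 1

/-- `σ` is a (feasible, preemptive, single machine) schedule. -/
structure IsSchedule [Fintype J] (r p : J → ℝ) (σ : ℝ → J → ℝ) : Prop where
  meas : ∀ j, Measurable fun u => σ u j
  nonneg : ∀ u j, 0 ≤ σ u j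
  sum_le_one : ∀ u, ∑ j, σ u j ≤ 1
  zero_before_release : ∀ u j, u < r j → σ u j = 0
  workDone_le : ∀ u j, workDone σ j u ≤ p j

/-- A schedule is non-idling if it uses the full machine capacity whenever
    some job is available. -/
def NonIdling [Fintype J] (r p : J → ℝ) (σ : ℝ → J → ℝ) : Prop :=
  ∀ u, (∃ j, availAt r p σ u j) → ∑ j, σ u j = 1

/-- The SRPT condition at time `u`: `Cl(u) ≠ ∅` and
    `min_{j ∈ Cl(u)} p_j(u) ≤ ((1-α)/α) · min_{j ∈ N(u)} y_j(u)`
    (the minimum over the empty set being `+∞`). -/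
def SrptCond (r p : J → ℝ) (α : ℝ) (σ : ℝ → J → ℝ) (u : ℝ) : Prop :=
  ∃ k, clAt r p α σ u k ∧
    ∀ j, ncAt r p α σ u j → remT p σ k u ≤ ((1 - α) / α) * workDone σ j u

/-- `k` is a clairvoyant job of minimal remaining processing time at `u`,
    emitting last among those. -/
def IsSrptChoice (r p : J → ℝ) (α : ℝ) (σ : ℝ → J → ℝ) (u : ℝ) (k : J) : Prop :=
  clAt r p α σ u k ∧
    (∀ j, clAt r p α σ u j → remT p σ k u ≤ remT p σ j u) ∧
    (∀ j, clAt r p α σ u j → remT p σ j u = remT p σ k u →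
      emitT p α σ j ≤ emitT p α σ k)

/-- `j` is a non-clairvoyant job with minimal progress at time `u`. -/
def IsMinNc (r p : J → ℝ) (α : ℝ) (σ : ℝ → J → ℝ) (u : ℝ) (j : J) : Prop :=
  ncAt r p α σ u j ∧ ∀ j', ncAt r p α σ u j' → workDone σ j u ≤ workDone σ j' u

/-- `σ` is an ALG-schedule: non-idling, and at any time with available jobs it
    either runs a single clairvoyant job of shortest remaining processing time
    (breaking ties by latest emission) when the SRPT condition holds, or it runs
    exactly the non-clairvoyant jobs of minimal progress at equal rates. -/
structure IsALG [Fintype J] (r p : J → ℝ) (α : ℝ) (σ : ℝ → J → ℝ) : Prop where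
  sched : IsSchedule r p σ
  nonidling : NonIdling r p σ
  srpt_branch : ∀ u, (∃ j, availAt r p σ u j) → SrptCond r p α σ u →
    ∃ k, IsSrptChoice r p α σ u k ∧ ∀ j, j ≠ k → σ u j = 0
  setf_branch : ∀ u, (∃ j, availAt r p σ u j) → ¬ SrptCond r p α σ u →
    (∀ j, procAt σ u j → IsMinNc r p α σ u j) ∧
    (∀ j j', IsMinNc r p α σ u j → IsMinNc r p α σ u j' → σ u j = σ u j')

/-- Right endpoint `min (C_j, t)` of the lifetime of `j` w.r.t. reference time `t`. -/
def lifeEnd (p : J → ℝ) (σ : ℝ → J → ℝ) (t : ℝ) (j : J) : ℝ :=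
  (min (cTime p σ j) (t : EReal)).toReal

/-- The lifetime `I_j = [r j, min (C_j, t)]` of job `j`. -/
def lifetime (r p : J → ℝ) (σ : ℝ → J → ℝ) (t : ℝ) (j : J) : Set ℝ :=
  Set.Icc (r j) (lifeEnd p σ t j)

/-- `E_N`-edge of the borrow graph: `i` is processed at some time of `I_j`
    while being non-clairvoyant. -/
def ENedge (r p : J → ℝ) (α : ℝ) (σ : ℝ → J → ℝ) (t : ℝ) (j i : J) : Prop :=
  ∃ u ∈ lifetime r p σ t j, procAt σ u i ∧ ncAt r p α σ u i

/-- `E_C`-edge of the borrow graph: `i` is processed at some time of `I_j`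
    while being clairvoyant. -/
def ECedge (r p : J → ℝ) (α : ℝ) (σ : ℝ → J → ℝ) (t : ℝ) (j i : J) : Prop :=
  ∃ u ∈ lifetime r p σ t j, procAt σ u i ∧ clAt r p α σ u i

/-- Edge of the borrow graph `G_B`. -/
def borrowEdge (r p : J → ℝ) (α : ℝ) (σ : ℝ → J → ℝ) (t : ℝ) (j i : J) : Prop :=
  ENedge r p α σ t j i ∨ ECedge r p α σ t j i

/-- `reaches j i` iff `i ∈ R_j`, i.e. `i` is reachable from `j` in the borrow
    graph (`j` itself included). -/
def reaches (r p : J → ℝ) (α : ℝ) (σ : ℝ → J → ℝ) (t : ℝ) : J → J → Prop :=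
  Relation.ReflTransGen (borrowEdge r p α σ t)

/-- Truncated progress `ȳ_j = min (y_j(t), α p_j)`. -/
def truncY (p : J → ℝ) (α : ℝ) (σ : ℝ → J → ℝ) (t : ℝ) (j : J) : ℝ :=
  min (workDone σ j t) (α * p j)

end

section Helpers

variable {J : Type*} [Fintype J] {r p : J → ℝ} {α : ℝ} {σ : ℝ → J → ℝ}

lemma sigma_le_one (hs : IsSchedule r p σ) (u : ℝ) (j : J) : σ u j ≤ 1 :=
  le_trans (Finset.single_le_sum (fun k _ => hs.nonneg u k) (Finset.mem_univ j))
    (hs.sum_le_one u)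

lemma intInt (hs : IsSchedule r p σ) (j : J) (a b : ℝ) :
    IntervalIntegrable (fun v => σ v j) volume a b := by
  have key : ∀ a b : ℝ, IntegrableOn (fun v => σ v j) (Set.Ioc a b) volume := by
    intro a b
    apply Integrable.mono' (integrable_const (1 : ℝ))
    · exact (hs.meas j).aestronglyMeasurable.restrict
    · filter_upwards with x
      rw [Real.norm_eq_abs, abs_of_nonneg (hs.nonneg x j)]
      exact sigma_le_one hs x j
  exact ⟨key a b, key b a⟩

lemma workDone_add (hs : IsSchedule r p σ) (j : J) (a b : ℝ) :
    workDone σ j b = workDone σ j a + ∫ v in a..b, σ v j := by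
  have := intervalIntegral.integral_add_adjacent_intervals
    (intInt hs j 0 a) (intInt hs j a b)
  unfold workDone
  linarith

lemma workDone_mono (hs : IsSchedule r p σ) (j : J) {a b : ℝ} (h : a ≤ b) :
    workDone σ j a ≤ workDone σ j b := by
  have h2 : (0:ℝ) ≤ ∫ v in a..b, σ v j :=
    intervalIntegral.integral_nonneg h (fun u _ => hs.nonneg u j)
  have := workDone_add hs j a b
  linarith

lemma workDone_lip (hs : IsSchedule r p σ) (j : J) {a b : ℝ} (h : a ≤ b) :
    workDone σ j b ≤ workDone σ j a + (b - a) := by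
  have h1 : (∫ v in a..b, σ v j) ≤ ∫ v in a..b, (1:ℝ) :=
    intervalIntegral.integral_mono_on h (intInt hs j a b)
      intervalIntegrable_const (fun u _ => sigma_le_one hs u j)
  have h2 : (∫ v in a..b, (1:ℝ)) = b - a := by simp
  have := workDone_add hs j a b
  linarith

lemma workDone_nonpos (hs : IsSchedule r p σ) (j : J) {v : ℝ} (h : v ≤ 0) :
    workDone σ j v ≤ 0 := by
  have h2 : (0:ℝ) ≤ ∫ u in v..(0:ℝ), σ u j :=
    intervalIntegral.integral_nonneg h (fun u _ => hs.nonneg u j)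
  have : workDone σ j 0 = workDone σ j v + ∫ u in v..(0:ℝ), σ u j := workDone_add hs j v 0
  have h0 : workDone σ j 0 = 0 := by unfold workDone; simp
  linarith

lemma lt_cTime (hs : IsSchedule r p σ) {j : J} {v : ℝ}
    (h : workDone σ j v < p j) : (v : EReal) < cTime p σ j := by
  set δ := p j - workDone σ j v with hδdef
  have hδ : 0 < δ := by simp [hδdef]; linarith
  have hlb : ∀ x ∈ (fun w : ℝ => (w : EReal)) '' {w : ℝ | workDone σ j w = p j},
      ((v + δ : ℝ) : EReal) ≤ x := by
    rintro _ ⟨v0, hv0, rfl⟩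
    simp only [Set.mem_setOf_eq] at hv0
    have hle : v + δ ≤ v0 := by
      by_contra hlt
      push_neg at hlt
      rcases le_or_gt v0 v with h1 | h1
      · have := workDone_mono hs j h1
        rw [hv0] at this
        linarith
      · have := workDone_lip hs j h1.le
        rw [hv0] at this
        linarith
    show ((v + δ : ℝ) : EReal) ≤ ((v0 : ℝ) : EReal)
    exact_mod_cast hle
  have hsinf : ((v + δ : ℝ) : EReal) ≤ cTime p σ j := le_sInf hlb
  refine lt_of_lt_of_le ?_ hsinf
  exact_mod_cast (by linarith : v < v + δ)

lemma cTime_nonneg (hinst : IsInstance r p α) (hs : IsSchedule r p σ) (j : J) :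
    (0 : EReal) ≤ cTime p σ j := by
  apply le_sInf
  rintro _ ⟨v0, hv0, rfl⟩
  simp only [Set.mem_setOf_eq] at hv0
  have : (0:ℝ) ≤ v0 := by
    by_contra h
    push_neg at h
    have := workDone_nonpos hs j h.le
    rw [hv0] at this
    linarith [hinst.p_pos j]
  show (0 : EReal) ≤ ((v0 : ℝ) : EReal)
  exact_mod_cast this

lemma lifeEnd_le (hinst : IsInstance r p α) (hs : IsSchedule r p σ) {t : ℝ}
    (ht : 0 ≤ t) (j : J) : lifeEnd p σ t j ≤ t := by
  unfold lifeEnd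
  have h1 : min (cTime p σ j) (t : EReal) ≤ ((t : ℝ) : EReal) := min_le_right _ _
  have h0 : (0 : EReal) ≤ min (cTime p σ j) (t : EReal) :=
    le_min (cTime_nonneg hinst hs j) (by exact_mod_cast ht)
  have hbot : min (cTime p σ j) (t : EReal) ≠ ⊥ := by
    intro hc
    rw [hc] at h0
    exact absurd h0 (by simp)
  have := EReal.toReal_le_toReal h1 hbot (by simp)
  simpa using this

lemma mem_lifetime_bounds (hinst : IsInstance r p α) (hs : IsSchedule r p σ) {t : ℝ}
    (ht : 0 ≤ t) {j : J} {u : ℝ} (hu : u ∈ lifetime r p σ t j) :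
    r j ≤ u ∧ u ≤ t :=
  ⟨hu.1, hu.2.trans (lifeEnd_le hinst hs ht j)⟩

lemma minNc_of_proc_nc (halg : IsALG r p α σ) {u : ℝ} {i : J}
    (hproc : procAt σ u i) (hnc : ncAt r p α σ u i) :
    ¬ SrptCond r p α σ u ∧ IsMinNc r p α σ u i := by
  have havail : ∃ j, availAt r p σ u j := ⟨i, hnc.1⟩
  have hnS : ¬ SrptCond r p α σ u := by
    intro hS
    obtain ⟨k, hk, hz⟩ := halg.srpt_branch u havail hS
    by_cases hik : i = k
    · subst hik
      exact absurd hnc.2 (not_le.mpr hk.1.2)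
    · have : σ u i = 0 := hz i hik
      exact absurd hproc (by simp [procAt, this])
  exact ⟨hnS, (halg.setf_branch u havail hnS).1 i hproc⟩

lemma key_bound (hinst : IsInstance r p α) (halg : IsALG r p α σ) {v : ℝ} {i j0 : J}
    (hja : availAt r p σ v j0) (hproc : procAt σ v i) (hnc : ncAt r p α σ v i) :
    workDone σ i v ≤ min (workDone σ j0 v) (α * p j0) := by
  obtain ⟨hnS, hmin⟩ := minNc_of_proc_nc halg hproc hnc
  rcases le_or_gt (workDone σ j0 v) (α * p j0) with hc | hc
  · have h1 : workDone σ i v ≤ workDone σ j0 v := hmin.2 j0 ⟨hja, hc⟩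
    exact le_min h1 (h1.trans hc)
  · have hcl : clAt r p α σ v j0 := ⟨hja, hc⟩
    rw [SrptCond] at hnS
    push_neg at hnS
    obtain ⟨j', hj', hgt⟩ := hnS j0 hcl
    have h2 : workDone σ i v ≤ workDone σ j' v := hmin.2 j' hj'
    have hα0 := hinst.alpha_mem.1
    have hα1 := hinst.alpha_mem.2
    have hpp := hinst.p_pos j0
    have hr : remT p σ j0 v < (1 - α) * p j0 := by
      unfold remT; nlinarith
    have h3 : ((1 - α) / α) * workDone σ i v < (1 - α) * p j0 := by
      have : ((1 - α) / α) * workDone σ i v ≤ ((1 - α) / α) * workDone σ j' v :=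
        mul_le_mul_of_nonneg_left h2 (le_of_lt (div_pos (by linarith) hα0))
      linarith [hgt]
    have hy : workDone σ i v < α * p j0 := by
      have h4 : α * (((1 - α) / α) * workDone σ i v) < α * ((1 - α) * p j0) :=
        mul_lt_mul_of_pos_left h3 hα0
      have h5 : α * (((1 - α) / α) * workDone σ i v) = (1 - α) * workDone σ i v := by
        field_simp
      rw [h5] at h4
      nlinarith
    exact le_min (by linarith) hy.le

lemma progress_bound (hinst : IsInstance r p α) (hs : IsSchedule r p σ)
    {i : J} {u t B : ℝ} (hru : r i ≤ u) (hut : u ≤ t)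
    (hyu : workDone σ i u ≤ B)
    (hbound : ∀ v, u < v → v ≤ t → procAt σ v i → ncAt r p α σ v i →
      workDone σ i v ≤ B) :
    min (workDone σ i t) (α * p i) ≤ B := by
  by_contra hcon
  push_neg at hcon
  rw [lt_min_iff] at hcon
  obtain ⟨hBt, hBα⟩ := hcon
  have hα0 := hinst.alpha_mem.1
  have hα1 := hinst.alpha_mem.2
  have hpp := hinst.p_pos i
  -- w = last time in [u,t] with work ≤ B
  set S1 : Set ℝ := {v | v ∈ Set.Icc u t ∧ workDone σ i v ≤ B} with hS1def
  have huS1 : u ∈ S1 := ⟨⟨le_refl u, hut⟩, hyu⟩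
  have hS1ne : S1.Nonempty := ⟨u, huS1⟩
  have hS1bdd : BddAbove S1 := ⟨t, fun x hx => hx.1.2⟩
  set w := sSup S1 with hwdef
  have huw : u ≤ w := le_csSup hS1bdd huS1
  have hwt : w ≤ t := csSup_le hS1ne (fun x hx => hx.1.2)
  have hyw : workDone σ i w ≤ B := by
    refine le_of_forall_pos_le_add ?_
    intro ε hε
    obtain ⟨v, hvS, hv⟩ := exists_lt_of_lt_csSup hS1ne (by linarith : w - ε < w)
    have hvw : v ≤ w := le_csSup hS1bdd hvS
    have := workDone_lip hs i hvw
    linarith [hvS.2]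
  have hBlt : ∀ v, w < v → v ≤ t → B < workDone σ i v := by
    intro v hwv hvt
    by_contra hcon2
    push_neg at hcon2
    have : v ∈ S1 := ⟨⟨le_trans huw hwv.le, hvt⟩, hcon2⟩
    exact absurd (le_csSup hS1bdd this) (not_le.mpr hwv)
  -- v' = last time in [w,t] with work ≤ α p i
  set S2 : Set ℝ := {v | v ∈ Set.Icc w t ∧ workDone σ i v ≤ α * p i} with hS2def
  have hwS2 : w ∈ S2 := ⟨⟨le_refl w, hwt⟩, by linarith⟩
  have hS2ne : S2.Nonempty := ⟨w, hwS2⟩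
  have hS2bdd : BddAbove S2 := ⟨t, fun x hx => hx.1.2⟩
  set v' := sSup S2 with hv'def
  have hwv'le : w ≤ v' := le_csSup hS2bdd hwS2
  have hv't : v' ≤ t := csSup_le hS2ne (fun x hx => hx.1.2)
  have hyv' : workDone σ i v' ≤ α * p i := by
    refine le_of_forall_pos_le_add ?_
    intro ε hε
    obtain ⟨v, hvS, hv⟩ := exists_lt_of_lt_csSup hS2ne (by linarith : v' - ε < v')
    have hvv' : v ≤ v' := le_csSup hS2bdd hvS
    have := workDone_lip hs i hvv'
    linarith [hvS.2]
  have hv'B : B < workDone σ i v' := by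
    by_contra hcon3
    push_neg at hcon3
    have hv'lt : v' < t := by
      rcases lt_or_eq_of_le hv't with h | h
      · exact h
      · rw [h] at hcon3; linarith
    set δ := min (α * p i - B) (t - v') with hδdef
    have hδpos : 0 < δ := lt_min (by linarith) (by linarith)
    have hmem : v' + δ ∈ S2 := by
      refine ⟨⟨by linarith, by
        have := min_le_right (α * p i - B) (t - v'); linarith⟩, ?_⟩
      have h1 := workDone_lip hs i (by linarith : v' ≤ v' + δ)
      have h2 := min_le_left (α * p i - B) (t - v')
      linarith
    have := le_csSup hS2bdd hmem
    linarith
  have hwv' : w < v' := by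
    rcases lt_or_eq_of_le hwv'le with h | h
    · exact h
    · rw [h] at hyw; linarith
  have hzero : ∀ v ∈ Set.Ioc w v', σ v i = 0 := by
    intro v hv
    by_contra hσ
    have hproc : procAt σ v i := lt_of_le_of_ne (hs.nonneg v i) (Ne.symm hσ)
    have hvt : v ≤ t := hv.2.trans hv't
    have hy : workDone σ i v ≤ α * p i := (workDone_mono hs i hv.2).trans hyv'
    have hyp : workDone σ i v < p i := by nlinarith
    have hav : availAt r p σ v i :=
      ⟨le_trans hru (by linarith [hv.1]), lt_cTime hs hyp⟩
    have h1 := hbound v (lt_of_le_of_lt huw hv.1) hvt hproc ⟨hav, hy⟩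
    have h2 := hBlt v hv.1 hvt
    linarith
  have hzero_int : (∫ v in w..v', σ v i) = 0 := by
    rw [intervalIntegral.integral_of_le hwv'.le]
    rw [MeasureTheory.setIntegral_congr_fun measurableSet_Ioc hzero]
    simp
  have hadd := workDone_add hs i w v'
  rw [hzero_int] at hadd
  linarith

end Helpers

/-- **Borrowing along non-clairvoyant paths.** If `j ∈ A(t)` can
reach `i` via a path of `E_N`-edges in the borrow graph, then `ȳ_j ≥ ȳ_i`. -/
theorem stmt11 {J : Type*} [Fintype J] {r p : J → ℝ} {α : ℝ} {σ : ℝ → J → ℝ}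
    (hinst : IsInstance r p α) (halg : IsALG r p α σ) (t : ℝ) (ht : 0 ≤ t)
    (j i : J) (hj : availAt r p σ t j)
    (hreach : Relation.ReflTransGen (ENedge r p α σ t) j i) :
    truncY p α σ t i ≤ truncY p α σ t j := by
  suffices h : ∀ i', Relation.ReflTransGen (ENedge r p α σ t) j i' →
      truncY p α σ t i' ≤ truncY p α σ t j ∧
      (∀ v m, r i' ≤ v → v ≤ t → procAt σ v m → ncAt r p α σ v m →
        workDone σ m v ≤ truncY p α σ t j) by
    exact (h i hreach).1
  intro i' hreach'
  induction hreach' with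
  | refl =>
    refine ⟨le_refl _, ?_⟩
    intro v m hrv hvt hproc hnc
    have hjav : availAt r p σ v j :=
      ⟨hrv, lt_of_le_of_lt (by exact_mod_cast hvt : (v : EReal) ≤ (t : EReal)) hj.2⟩
    have h1 := key_bound hinst halg hjav hproc hnc
    have h2 : min (workDone σ j v) (α * p j) ≤ truncY p α σ t j :=
      min_le_min (workDone_mono halg.sched j hvt) (le_refl _)
    exact h1.trans h2
  | @tail k i2 hpath hedge ih =>
    obtain ⟨hk_le, hk_inv⟩ := ih
    obtain ⟨u, hu_mem, hproc_u, hnc_u⟩ := hedge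
    obtain ⟨hu_rk, hu_t⟩ := mem_lifetime_bounds hinst halg.sched ht hu_mem
    have hyu : workDone σ i2 u ≤ truncY p α σ t j :=
      hk_inv u i2 hu_rk hu_t hproc_u hnc_u
    have hi_le : truncY p α σ t i2 ≤ truncY p α σ t j := by
      refine progress_bound hinst halg.sched hnc_u.1.1 hu_t hyu ?_
      intro v huv hvt hproc hnc
      exact hk_inv v i2 (hu_rk.trans huv.le) hvt hproc hnc
    refine ⟨hi_le, ?_⟩
    intro v m hrv hvt hproc hnc
    by_cases hav : (v : EReal) < cTime p σ i2
    · have hiav : availAt r p σ v i2 := ⟨hrv, hav⟩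
      have h1 := key_bound hinst halg hiav hproc hnc
      have h2 : min (workDone σ i2 v) (α * p i2) ≤ truncY p α σ t i2 :=
        min_le_min (workDone_mono halg.sched i2 hvt) (le_refl _)
      exact h1.trans (h2.trans hi_le)
    · push_neg at hav
      have huv : u < v := by
        have h1 : (u : EReal) < (v : EReal) := lt_of_lt_of_le hnc_u.1.2 hav
        exact_mod_cast h1
      exact hk_inv v m (hu_rk.trans huv.le) hvt hproc hnc
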